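/- Let d ≥ 1 be an integer. There exists a constant K > 0, depending only on d, such that for every integer L ≥ 1 and every r ∈ (0, π/2], setting N = binom(d+L, d), one has N² · ∫₀^r (sin φ)^{2d−1} · cos φ · ( ∫_{r−φ}^{π/2} (sin θ)^{2d−1} · (cos θ)^{2L+1} dθ ) dφ ≤ K · L^{d−1/2}. -/

import Mathlib

open Real MeasureTheory intervalIntegral

private lemma pev_integral_exp_neg_mul (c a b : ℝ) (hc : c ≠ 0) :
    ∫ x in a..b, Real.exp (-(c * x)) = (Real.exp (-(c * a)) - Real.exp (-(c * b))) / c := by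
  have h : ∀ x : ℝ, Real.exp (-(c * x)) = Real.exp ((-c) * x) := by
    intro x; ring_nf
  simp_rw [h]
  rw [intervalIntegral.integral_comp_mul_left Real.exp (neg_ne_zero.mpr hc), integral_exp]
  rw [smul_eq_mul]
  field_simp
  ring

private lemma pev_outer_integral (c r : ℝ) (hc : 0 < c) :
    ∫ φ in (0:ℝ)..r, Real.exp (-(c * (r - φ))) = (1 - Real.exp (-(c * r))) / c := by
  have h : ∀ φ : ℝ, Real.exp (-(c * (r - φ))) = Real.exp (-(c * r)) * Real.exp (-((-c) * φ)) := by
    intro φ; rw [← Real.exp_add]; ring_nf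
  simp_rw [h]
  rw [intervalIntegral.integral_const_mul, pev_integral_exp_neg_mul (-c) 0 r (by linarith)]
  have hE : Real.exp (-(c * r)) * Real.exp (c * r) = 1 := by
    rw [← Real.exp_add]; simp
  have h2 : Real.exp (-(c * r)) * (1 - Real.exp (c * r)) = Real.exp (-(c * r)) - 1 := by
    rw [mul_sub, mul_one, hE]
  simp only [mul_zero, neg_zero, Real.exp_zero, neg_mul, neg_neg]
  rw [← mul_div_assoc, h2, div_neg, ← neg_div, neg_sub]

private lemma pev_pointwise (d L : ℕ) (hL : 1 ≤ L) {θ : ℝ} (h0 : 0 ≤ θ) (h2 : θ ≤ π / 2) :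
    Real.sin θ ^ (2 * d - 1) * Real.cos θ ^ (2 * L + 1) ≤
      Real.exp (π ^ 2 / 4) * (Nat.factorial (2 * d - 1) : ℝ) / Real.sqrt L ^ (2 * d - 1) *
        Real.exp (-(Real.sqrt L * θ)) := by
  set n := 2 * d - 1 with hn
  set s := Real.sqrt L with hsdef
  have hL0 : (0:ℝ) ≤ L := by positivity
  have hL1 : (1:ℝ) ≤ L := by exact_mod_cast hL
  have hs0 : 0 < s := Real.sqrt_pos.mpr (by linarith)
  have hπ : (0:ℝ) < π := pi_pos
  have hπ2 : (0:ℝ) < π ^ 2 := by positivity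
  have h2pi : θ ≤ π := by linarith
  have hsin0 : 0 ≤ Real.sin θ := Real.sin_nonneg_of_nonneg_of_le_pi h0 h2pi
  have hcos0 : 0 ≤ Real.cos θ := Real.cos_nonneg_of_mem_Icc ⟨by linarith, h2⟩
  have hss : s ^ 2 = (L:ℝ) := Real.sq_sqrt hL0
  have h1 : Real.sin θ ^ n ≤ θ ^ n := pow_le_pow_left₀ hsin0 (Real.sin_le h0) n
  have hcos : Real.cos θ ≤ Real.exp (-(2 / π ^ 2 * θ ^ 2)) := by
    have ha : |θ| ≤ π := by rw [abs_of_nonneg h0]; exact h2pi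
    have := Real.cos_le_one_sub_mul_cos_sq ha
    have he := Real.add_one_le_exp (-(2 / π ^ 2 * θ ^ 2))
    linarith
  have hcospow : Real.cos θ ^ (2 * L + 1) ≤ Real.exp (-(4 / π ^ 2 * L * θ ^ 2)) := by
    calc Real.cos θ ^ (2 * L + 1) ≤ Real.exp (-(2 / π ^ 2 * θ ^ 2)) ^ (2 * L + 1) :=
          pow_le_pow_left₀ hcos0 hcos _
      _ = Real.exp ((2 * L + 1 : ℕ) * (-(2 / π ^ 2 * θ ^ 2))) := by
          rw [Real.exp_nat_mul]
      _ ≤ Real.exp (-(4 / π ^ 2 * L * θ ^ 2)) := by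
          apply Real.exp_le_exp.mpr
          push_cast
          have hq : 0 ≤ θ ^ 2 / π ^ 2 := by positivity
          have hexq : (2 * (L:ℝ) + 1) * (2 / π ^ 2 * θ ^ 2)
              = 4 / π ^ 2 * L * θ ^ 2 + 2 * (θ ^ 2 / π ^ 2) := by
            field_simp; ring
          linarith
  have hexp2 : Real.exp (-(4 / π ^ 2 * L * θ ^ 2)) ≤
      Real.exp (π ^ 2 / 4) * Real.exp (-(2 * (s * θ))) := by
    rw [← Real.exp_add]
    apply Real.exp_le_exp.mpr
    have h' : 2 * (s * θ) * π ^ 2 ≤ 4 * L * θ ^ 2 + π ^ 2 * (π ^ 2 / 4) := by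
      nlinarith [sq_nonneg (2 * (s * θ) - π ^ 2 / 2), hss]
    have goal' : 2 * (s * θ) - π ^ 2 / 4 ≤ 4 * L * θ ^ 2 / π ^ 2 := by
      rw [le_div_iff₀ hπ2]
      nlinarith [h']
    have e1 : 4 / π ^ 2 * (L:ℝ) * θ ^ 2 = 4 * L * θ ^ 2 / π ^ 2 := by ring
    rw [e1]
    linarith [goal']
  have hthetapow : θ ^ n ≤ (Nat.factorial n : ℝ) * Real.exp (s * θ) / s ^ n := by
    have := Real.pow_div_factorial_le_exp (s * θ) (mul_nonneg hs0.le h0) n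
    rw [div_le_iff₀ (by positivity : (0:ℝ) < (Nat.factorial n : ℝ))] at this
    rw [le_div_iff₀ (pow_pos hs0 n)]
    calc θ ^ n * s ^ n = (s * θ) ^ n := by rw [mul_pow]; ring
      _ ≤ Real.exp (s * θ) * (Nat.factorial n : ℝ) := this
      _ = (Nat.factorial n : ℝ) * Real.exp (s * θ) := by ring
  calc Real.sin θ ^ n * Real.cos θ ^ (2 * L + 1)
      ≤ θ ^ n * (Real.exp (π ^ 2 / 4) * Real.exp (-(2 * (s * θ)))) :=
        mul_le_mul h1 (hcospow.trans hexp2) (pow_nonneg hcos0 _) (pow_nonneg h0 n)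
    _ ≤ ((Nat.factorial n : ℝ) * Real.exp (s * θ) / s ^ n) *
          (Real.exp (π ^ 2 / 4) * Real.exp (-(2 * (s * θ)))) :=
        mul_le_mul_of_nonneg_right hthetapow (by positivity)
    _ = Real.exp (π ^ 2 / 4) * (Nat.factorial n : ℝ) / s ^ n *
          (Real.exp (s * θ) * Real.exp (-(2 * (s * θ)))) := by ring
    _ = Real.exp (π ^ 2 / 4) * (Nat.factorial n : ℝ) / s ^ n * Real.exp (-(s * θ)) := by
        rw [← Real.exp_add]; ring_nf

private lemma pev_final_algebra (d L : ℕ) (hd : 1 ≤ d) (hL : 1 ≤ L) (A : ℝ) :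
    (((d : ℝ) + 1) * L) ^ (2 * d) * (A / Real.sqrt L ^ (2 * d - 1) / L)
      = ((d : ℝ) + 1) ^ (2 * d) * A * (L : ℝ) ^ ((d : ℝ) - 1 / 2) := by
  have hx0 : (0:ℝ) < L := by exact_mod_cast hL
  set x := (L : ℝ) with hx
  have hcast : ((2 * d - 1 : ℕ) : ℝ) = 2 * (d : ℝ) - 1 := by
    rw [Nat.cast_sub (by omega : 1 ≤ 2 * d)]; push_cast; ring
  have h1 : Real.sqrt x ^ (2 * d - 1) = x ^ ((1 / 2 : ℝ) * (2 * (d : ℝ) - 1)) := by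
    rw [Real.sqrt_eq_rpow, ← Real.rpow_natCast (x ^ (1 / 2 : ℝ)) (2 * d - 1),
      ← Real.rpow_mul hx0.le, hcast]
  have h2 : x ^ (2 * d) = x ^ (((2 * d : ℕ) : ℝ)) := (Real.rpow_natCast x (2 * d)).symm
  have hmul : x ^ ((1 / 2 : ℝ) * (2 * (d : ℝ) - 1)) * x
      = x ^ ((1 / 2 : ℝ) * (2 * (d : ℝ) - 1) + 1) := by
    rw [Real.rpow_add hx0, Real.rpow_one]
  have key : x ^ (((2 * d : ℕ) : ℝ)) / (x ^ ((1 / 2 : ℝ) * (2 * (d : ℝ) - 1)) * x)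
      = x ^ ((d : ℝ) - 1 / 2) := by
    rw [hmul, ← Real.rpow_sub hx0]
    congr 1
    push_cast
    ring
  rw [mul_pow, h1, h2]
  calc ((d : ℝ) + 1) ^ (2 * d) * x ^ (((2 * d : ℕ) : ℝ)) *
        (A / x ^ ((1 / 2 : ℝ) * (2 * (d : ℝ) - 1)) / x)
      = ((d : ℝ) + 1) ^ (2 * d) * A *
        (x ^ (((2 * d : ℕ) : ℝ)) / (x ^ ((1 / 2 : ℝ) * (2 * (d : ℝ) - 1)) * x)) := by
        ring
    _ = ((d : ℝ) + 1) ^ (2 * d) * A * x ^ ((d : ℝ) - 1 / 2) := by rw [key]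

/-- Variance estimate for the projective ensemble on `ℂP^d`: with `N = binom(d+L, d)`,
`N² ∫₀ʳ (sin φ)^{2d-1} cos φ (∫_{r-φ}^{π/2} (sin θ)^{2d-1} (cos θ)^{2L+1} dθ) dφ ≤ K L^{d-1/2}`. -/
theorem projective_ensemble_variance_integral (d : ℕ) (hd : 1 ≤ d) :
    ∃ K > (0 : ℝ), ∀ L : ℕ, 1 ≤ L → ∀ r : ℝ, 0 < r → r ≤ π / 2 →
      ((d + L).choose d : ℝ) ^ 2 *
          ∫ φ in (0 : ℝ)..r, Real.sin φ ^ (2 * d - 1) * Real.cos φ *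
            ∫ θ in (r - φ)..(π / 2), Real.sin θ ^ (2 * d - 1) * Real.cos θ ^ (2 * L + 1)
        ≤ K * (L : ℝ) ^ ((d : ℝ) - 1 / 2) := by
  refine ⟨((d : ℝ) + 1) ^ (2 * d) * (Real.exp (π ^ 2 / 4) * (Nat.factorial (2 * d - 1) : ℝ)),
    by positivity, ?_⟩
  intro L hL r hr0 hrπ
  have hπ : (0:ℝ) < π := pi_pos
  have hx1 : (1:ℝ) ≤ L := by exact_mod_cast hL
  have hx0 : (0:ℝ) < L := by linarith
  have hs0 : 0 < Real.sqrt (L:ℝ) := Real.sqrt_pos.mpr hx0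
  have hss : Real.sqrt (L:ℝ) ^ 2 = (L:ℝ) := Real.sq_sqrt hx0.le
  have hA0 : 0 < Real.exp (π ^ 2 / 4) * (Nat.factorial (2 * d - 1) : ℝ) := by positivity
  set A := Real.exp (π ^ 2 / 4) * (Nat.factorial (2 * d - 1) : ℝ) with hAdef
  set s := Real.sqrt (L:ℝ) with hsdef
  have hfc : Continuous fun θ : ℝ => Real.sin θ ^ (2 * d - 1) * Real.cos θ ^ (2 * L + 1) :=
    (Real.continuous_sin.pow _).mul (Real.continuous_cos.pow _)
  have hgc : Continuous fun θ : ℝ => A / s ^ (2 * d - 1) * Real.exp (-(s * θ)) := by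
    fun_prop
  -- inner bound
  have inner_bound : ∀ φ ∈ Set.Icc (0:ℝ) r,
      (∫ θ in (r - φ)..(π / 2), Real.sin θ ^ (2 * d - 1) * Real.cos θ ^ (2 * L + 1))
        ≤ A / s ^ (2 * d - 1) / s * Real.exp (-(s * (r - φ))) := by
    intro φ hφ
    have ht0 : 0 ≤ r - φ := by linarith [hφ.2]
    have htπ : r - φ ≤ π / 2 := by linarith [hφ.1]
    have hmono : (∫ θ in (r - φ)..(π / 2), Real.sin θ ^ (2 * d - 1) * Real.cos θ ^ (2 * L + 1))
        ≤ ∫ θ in (r - φ)..(π / 2), A / s ^ (2 * d - 1) * Real.exp (-(s * θ)) := by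
      apply intervalIntegral.integral_mono_on htπ (hfc.intervalIntegrable _ _)
        (hgc.intervalIntegrable _ _)
      intro θ hθ
      have := pev_pointwise d L hL (le_trans ht0 hθ.1) hθ.2
      rw [hAdef, hsdef]
      exact this
    have hval : (∫ θ in (r - φ)..(π / 2), A / s ^ (2 * d - 1) * Real.exp (-(s * θ)))
        = A / s ^ (2 * d - 1) *
            ((Real.exp (-(s * (r - φ))) - Real.exp (-(s * (π / 2)))) / s) := by
      rw [intervalIntegral.integral_const_mul, pev_integral_exp_neg_mul s _ _ hs0.ne']
    have hB0 : (0:ℝ) ≤ A / s ^ (2 * d - 1) := by positivity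
    have hfin : A / s ^ (2 * d - 1) *
          ((Real.exp (-(s * (r - φ))) - Real.exp (-(s * (π / 2)))) / s)
        ≤ A / s ^ (2 * d - 1) / s * Real.exp (-(s * (r - φ))) := by
      have h1 : (Real.exp (-(s * (r - φ))) - Real.exp (-(s * (π / 2)))) / s
          ≤ Real.exp (-(s * (r - φ))) / s := by
        rw [sub_div]
        have h2 : 0 ≤ Real.exp (-(s * (π / 2))) / s :=
          div_nonneg (Real.exp_nonneg _) hs0.le
        linarith
      calc A / s ^ (2 * d - 1) *
            ((Real.exp (-(s * (r - φ))) - Real.exp (-(s * (π / 2)))) / s)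
          ≤ A / s ^ (2 * d - 1) * (Real.exp (-(s * (r - φ))) / s) :=
            mul_le_mul_of_nonneg_left h1 hB0
        _ = A / s ^ (2 * d - 1) / s * Real.exp (-(s * (r - φ))) := by ring
    rw [hval] at hmono
    linarith [hmono, hfin]
  -- continuity of the inner integral as a function of φ
  have hprim : Continuous fun x : ℝ =>
      ∫ θ in (0:ℝ)..x, Real.sin θ ^ (2 * d - 1) * Real.cos θ ^ (2 * L + 1) :=
    intervalIntegral.continuous_primitive (fun a b => hfc.intervalIntegrable (μ := volume) a b) 0
  have hFc : Continuous fun φ : ℝ =>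
      ∫ θ in (r - φ)..(π / 2), Real.sin θ ^ (2 * d - 1) * Real.cos θ ^ (2 * L + 1) := by
    have heq : ∀ φ : ℝ,
        (∫ θ in (r - φ)..(π / 2), Real.sin θ ^ (2 * d - 1) * Real.cos θ ^ (2 * L + 1))
          = (∫ θ in (0:ℝ)..(π / 2), Real.sin θ ^ (2 * d - 1) * Real.cos θ ^ (2 * L + 1))
            - ∫ θ in (0:ℝ)..(r - φ), Real.sin θ ^ (2 * d - 1) * Real.cos θ ^ (2 * L + 1) := by
      intro φ
      have := intervalIntegral.integral_add_adjacent_intervals (a := (0:ℝ)) (b := r - φ)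
        (c := π / 2) (μ := volume) (hfc.intervalIntegrable _ _) (hfc.intervalIntegrable _ _)
      linarith
    simp only [heq]
    exact continuous_const.sub (hprim.comp (continuous_const.sub continuous_id))
  -- outer bound
  have houter : (∫ φ in (0:ℝ)..r, Real.sin φ ^ (2 * d - 1) * Real.cos φ *
        ∫ θ in (r - φ)..(π / 2), Real.sin θ ^ (2 * d - 1) * Real.cos θ ^ (2 * L + 1))
      ≤ ∫ φ in (0:ℝ)..r, A / s ^ (2 * d - 1) / s * Real.exp (-(s * (r - φ))) := by
    apply intervalIntegral.integral_mono_on hr0.le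
    · exact (((Real.continuous_sin.pow _).mul Real.continuous_cos).mul hFc).intervalIntegrable _ _
    · exact (by fun_prop : Continuous fun φ : ℝ =>
        A / s ^ (2 * d - 1) / s * Real.exp (-(s * (r - φ)))).intervalIntegrable _ _
    intro φ hφ
    have hφ0 := hφ.1
    have hφr := hφ.2
    have hφπ : φ ≤ π / 2 := le_trans hφr hrπ
    have hsin : 0 ≤ Real.sin φ := Real.sin_nonneg_of_nonneg_of_le_pi hφ0 (by linarith)
    have hcos : 0 ≤ Real.cos φ := Real.cos_nonneg_of_mem_Icc ⟨by linarith, hφπ⟩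
    have hF0 : 0 ≤ ∫ θ in (r - φ)..(π / 2),
        Real.sin θ ^ (2 * d - 1) * Real.cos θ ^ (2 * L + 1) := by
      apply intervalIntegral.integral_nonneg (by linarith)
      intro θ hθ
      have h1 : 0 ≤ θ := le_trans (by linarith) hθ.1
      have h2 : 0 ≤ Real.sin θ := Real.sin_nonneg_of_nonneg_of_le_pi h1 (by linarith [hθ.2])
      have h3 : 0 ≤ Real.cos θ := Real.cos_nonneg_of_mem_Icc ⟨by linarith, hθ.2⟩
      positivity
    have hle1 : Real.sin φ ^ (2 * d - 1) * Real.cos φ ≤ 1 :=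
      mul_le_one₀ (pow_le_one₀ hsin (Real.sin_le_one φ)) hcos (Real.cos_le_one φ)
    have hsp0 : 0 ≤ Real.sin φ ^ (2 * d - 1) * Real.cos φ := by positivity
    have step1 : Real.sin φ ^ (2 * d - 1) * Real.cos φ *
          (∫ θ in (r - φ)..(π / 2), Real.sin θ ^ (2 * d - 1) * Real.cos θ ^ (2 * L + 1))
        ≤ ∫ θ in (r - φ)..(π / 2), Real.sin θ ^ (2 * d - 1) * Real.cos θ ^ (2 * L + 1) := by
      nlinarith [mul_nonneg (sub_nonneg.mpr hle1) hF0]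
    exact le_trans step1 (inner_bound φ hφ)
  -- compute the bounding integral
  have hIval : (∫ φ in (0:ℝ)..r, A / s ^ (2 * d - 1) / s * Real.exp (-(s * (r - φ))))
      = A / s ^ (2 * d - 1) / s * ((1 - Real.exp (-(s * r))) / s) := by
    rw [intervalIntegral.integral_const_mul, pev_outer_integral s r hs0]
  have houter2 : A / s ^ (2 * d - 1) / s * ((1 - Real.exp (-(s * r))) / s)
      ≤ A / s ^ (2 * d - 1) / L := by
    have hB0 : (0:ℝ) ≤ A / s ^ (2 * d - 1) / s := by positivity
    have h1 : (1 - Real.exp (-(s * r))) / s ≤ 1 / s := by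
      rw [sub_div]
      have h2 : 0 ≤ Real.exp (-(s * r)) / s := div_nonneg (Real.exp_nonneg _) hs0.le
      linarith
    calc A / s ^ (2 * d - 1) / s * ((1 - Real.exp (-(s * r))) / s)
        ≤ A / s ^ (2 * d - 1) / s * (1 / s) := mul_le_mul_of_nonneg_left h1 hB0
      _ = A / s ^ (2 * d - 1) / s ^ 2 := by ring
      _ = A / s ^ (2 * d - 1) / L := by rw [hss]
  have hdouble : (∫ φ in (0:ℝ)..r, Real.sin φ ^ (2 * d - 1) * Real.cos φ *
        ∫ θ in (r - φ)..(π / 2), Real.sin θ ^ (2 * d - 1) * Real.cos θ ^ (2 * L + 1))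
      ≤ A / s ^ (2 * d - 1) / L := by
    rw [hIval] at houter
    linarith [houter, houter2]
  -- binomial bound
  have hNnat : (d + L).choose d ≤ ((d + 1) * L) ^ d := by
    calc (d + L).choose d ≤ (d + L) ^ d := Nat.choose_le_pow (d + L) d
      _ ≤ ((d + 1) * L) ^ d := by
          apply Nat.pow_le_pow_left
          have : d ≤ d * L := Nat.le_mul_of_pos_right d (by omega)
          nlinarith [this]
  have hN : ((d + L).choose d : ℝ) ≤ (((d:ℝ) + 1) * L) ^ d := by
    have := hNnat
    have hc : (((d + 1) * L : ℕ) : ℝ) = ((d:ℝ) + 1) * L := by push_cast; ring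
    calc ((d + L).choose d : ℝ) ≤ (((d + 1) * L : ℕ) : ℝ) ^ d := by exact_mod_cast this
      _ = (((d:ℝ) + 1) * L) ^ d := by rw [hc]
  have hN2 : ((d + L).choose d : ℝ) ^ 2 ≤ (((d:ℝ) + 1) * L) ^ (2 * d) := by
    rw [mul_comm 2 d, pow_mul]
    exact pow_le_pow_left₀ (by positivity) hN 2
  -- final chain
  calc ((d + L).choose d : ℝ) ^ 2 *
        ∫ φ in (0:ℝ)..r, Real.sin φ ^ (2 * d - 1) * Real.cos φ *
          ∫ θ in (r - φ)..(π / 2), Real.sin θ ^ (2 * d - 1) * Real.cos θ ^ (2 * L + 1)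
      ≤ ((d + L).choose d : ℝ) ^ 2 * (A / s ^ (2 * d - 1) / L) :=
        mul_le_mul_of_nonneg_left hdouble (by positivity)
    _ ≤ (((d:ℝ) + 1) * L) ^ (2 * d) * (A / s ^ (2 * d - 1) / L) := by
        apply mul_le_mul_of_nonneg_right hN2
        positivity
    _ = ((d:ℝ) + 1) ^ (2 * d) * A * (L : ℝ) ^ ((d : ℝ) - 1 / 2) := by
        rw [hsdef]
        exact pev_final_algebra d L hd hL A
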